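/- arXiv:1907.02369 — 3 statements merged into one kernel-verified Lean document; each statement's English description precedes it below -/
import Mathlib

section
/- For any probability distribution w on an n-element set, ‖w‖² ≥ (1/n)(1 + ‖w − u‖₁²)/1, i.e., the squared 2-norm of w is at least (1 + ‖w−u‖₁²)/n, where u is the uniform distribution. -/
/-- For any probability distribution `w` on an `n`-element set,
`‖w‖² ≥ (1 + ‖w − u‖₁²)/n`, where `u` is the uniform distribution. -/
theorem squared_two_norm_ge_one_plus_l1_sq
    {n : ℕ} (hn : 0 < n) (w : Fin n → ℝ)
    (hnonneg : ∀ i, 0 ≤ w i) (hsum : ∑ i, w i = 1) :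
    ∑ i, (w i) ^ 2 ≥ (1 / n) * (1 + (∑ i, |w i - 1 / n|) ^ 2) := by
  have hn' : (0:ℝ) < n := by exact_mod_cast hn
  have hCS : (∑ i, |w i - 1 / n|) ^ 2 ≤ (n : ℝ) * ∑ i, (w i - 1 / n) ^ 2 := by
    have := sq_sum_le_card_mul_sum_sq (s := Finset.univ) (f := fun i => |w (i : Fin n) - 1 / n|)
    simpa [sq_abs] using this
  have hexp : ∑ i, (w i - 1 / n) ^ 2 = (∑ i, (w i) ^ 2) - 1 / n := by
    have : ∀ i : Fin n, (w i - 1 / n) ^ 2 = (w i) ^ 2 - 2 * (1/n) * w i + (1/n)^2 := by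
      intro i; ring
    rw [Finset.sum_congr rfl fun i _ => this i]
    rw [Finset.sum_add_distrib, Finset.sum_sub_distrib, ← Finset.mul_sum, hsum,
      Finset.sum_const, Finset.card_univ, Fintype.card_fin]
    field_simp
    ring_nf
    field_simp
    ring
  have key : (1 / (n:ℝ)) * (∑ i, |w i - 1 / n|) ^ 2 ≤ (∑ i, (w i) ^ 2) - 1 / n := by
    rw [← hexp]
    calc (1 / (n:ℝ)) * (∑ i, |w i - 1 / n|) ^ 2
        ≤ (1 / n) * ((n : ℝ) * ∑ i, (w i - 1 / n) ^ 2) := by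
          apply mul_le_mul_of_nonneg_left hCS; positivity
      _ = ∑ i, (w i - 1 / n) ^ 2 := by field_simp
  have := key
  nlinarith [key]
end

section
/- Let S ⊆ V and for α, β > 0 define the (α,β)-diffusion core S_{α,β} = { v ∈ S : Pr(τ_v(Sᶜ) > α·φ(S)^{-1}) ≥ β }, where τ_v(Sᶜ) is the hitting time of Sᶜ by the lazy random walk from v. Assuming Pr_{v∼π_S}(τ_v(Sᶜ) > α·φ(S)^{-1}) ≥ 1 − α/2 where π_S is the stationary distribution conditioned on S, it holds that d(S_{α,β})/d(S) > 1 − α/(2(1−β)). -/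
open Finset

/-- size of the `(α,β)`-diffusion core.  Here `esc v` denotes the probability
`Pr(τ_v(Sᶜ) > α·φ(S)⁻¹)` that the lazy walk from `v` stays in `S` for `α·φ(S)⁻¹` steps,
`deg` the degree function, and the hypothesis is the Spielman–Teng escape bound
`Pr_{v∼π_S}(τ_v(Sᶜ) > α·φ(S)⁻¹) ≥ 1 − α/2`.  The conclusion:
`d(S_{α,β})/d(S) > 1 − α/(2(1−β))`. -/
theorem diffusion_core_size
    {V : Type*} [DecidableEq V]
    (S : Finset V) (deg : V → ℝ) (esc : V → ℝ)
    (α β : ℝ) (hα : 0 < α) (hβ : 0 < β) (hβ1 : β < 1)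
    (hdegpos : ∀ v ∈ S, 0 < deg v)
    (hesc0 : ∀ v, 0 ≤ esc v) (hesc1 : ∀ v, esc v ≤ 1)
    (hST : ∑ v ∈ S, (deg v / ∑ u ∈ S, deg u) * esc v ≥ 1 - α / 2)
    (hSne : S.Nonempty) :
    (∑ v ∈ S.filter (fun v => esc v ≥ β), deg v) / (∑ v ∈ S, deg v)
      > 1 - α / (2 * (1 - β)) := by
  set D : ℝ := ∑ v ∈ S, deg v with hD
  have hDpos : 0 < D := Finset.sum_pos hdegpos hSne
  set T : Finset V := S.filter (fun v => esc v ≥ β) with hT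
  set T' : Finset V := S.filter (fun v => ¬ (esc v ≥ β)) with hT'
  set C : ℝ := ∑ v ∈ T, deg v with hC
  have hβ' : 0 < 1 - β := by linarith
  have hsplit : C + ∑ v ∈ T', deg v = D := by
    rw [hC, hT, hT', hD]
    exact Finset.sum_filter_add_sum_filter_not S _ _
  have hCD : C ≤ D := by
    have : 0 ≤ ∑ v ∈ T', deg v :=
      Finset.sum_nonneg fun v hv => (hdegpos v (Finset.mem_filter.mp hv).1).le
    linarith
  have hsum : ∑ v ∈ S, deg v * esc v ≥ (1 - α/2) * D := by
    have : ∑ v ∈ S, (deg v / D) * esc v = (∑ v ∈ S, deg v * esc v) / D := by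
      rw [Finset.sum_div]
      exact Finset.sum_congr rfl fun v _ => by ring
    rw [this] at hST
    calc (1 - α/2) * D ≤ ((∑ v ∈ S, deg v * esc v) / D) * D := by
          exact mul_le_mul_of_nonneg_right hST hDpos.le
      _ = ∑ v ∈ S, deg v * esc v := by field_simp
  have hsplit2 : ∑ v ∈ S, deg v * esc v
      = ∑ v ∈ T, deg v * esc v + ∑ v ∈ T', deg v * esc v :=
    (Finset.sum_filter_add_sum_filter_not S _ _).symm
  have hTbound : ∑ v ∈ T, deg v * esc v ≤ C :=
    Finset.sum_le_sum fun v hv => by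
      have hd := hdegpos v (Finset.mem_filter.mp hv).1
      nlinarith [hesc1 v]
  rcases T'.eq_empty_or_nonempty with he | hne
  · have : C = D := by
      rw [he] at hsplit; simpa using hsplit
    rw [this, div_self hDpos.ne']
    have : 0 < α / (2 * (1 - β)) := by positivity
    linarith
  · have hstrict : ∑ v ∈ T', deg v * esc v < β * ∑ v ∈ T', deg v := by
      rw [Finset.mul_sum]
      apply Finset.sum_lt_sum_of_nonempty hne
      intro v hv
      have hm := Finset.mem_filter.mp hv
      have hd := hdegpos v hm.1
      have : esc v < β := lt_of_not_ge hm.2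
      nlinarith
    have key : (1 - α/2) * D < C + β * (D - C) := by
      have : β * ∑ v ∈ T', deg v = β * (D - C) := by
        rw [show D - C = ∑ v ∈ T', deg v by linarith]
      nlinarith
    rw [gt_iff_lt, show (1 : ℝ) - α / (2 * (1 - β)) = ((1 - β) - α/2) / (1 - β) by
      field_simp, div_lt_div_iff₀ hβ' hDpos]
    nlinarith
end

section
/- Suppose a distribution v on the vertices of a graph puts mass at least γ on the diffusion core A_d of a set A ⊆ V with |A| ≤ (1+ε)n/2, and suppose that a t-step random walk started from any point of A_d stays inside A with probability at least 3/4. If γ > 2(1+ε)/3, then ‖P^t v‖² ≥ (1/n)(1 + 4(3γ/4 − (1+ε)/2)²). -/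
open Finset

/-- If a distribution `v` puts mass at least `γ` on the diffusion core `Ad`
of a set `A` with `|A| ≤ (1+ε)n/2`, every `t`-step walk from `Ad` stays in `A` with
probability `≥ 3/4`, and `γ > 2(1+ε)/3`, then
`‖P^t v‖² ≥ (1/n)(1 + 4(3γ/4 − (1+ε)/2)²)`. -/
theorem two_norm_lower_bound_far_from_expander
    {n : ℕ} (hn : 0 < n) (P : Matrix (Fin n) (Fin n) ℝ)
    (hPnonneg : ∀ i j, 0 ≤ P i j)
    (hPcols : ∀ j, ∑ i, P i j = 1)
    (t : ℕ) (v : Fin n → ℝ)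
    (hvnonneg : ∀ i, 0 ≤ v i) (hvsum : ∑ i, v i = 1)
    (A Ad : Finset (Fin n)) (hAdA : Ad ⊆ A)
    (ε γ : ℝ) (hε : 0 ≤ ε)
    (hAcard : (A.card : ℝ) ≤ (1 + ε) * n / 2)
    (hmass : ∑ i ∈ Ad, v i ≥ γ)
    (hstay : ∀ i ∈ Ad, ∑ j ∈ A, (P ^ t) j i ≥ 3 / 4)
    (hγ : γ > 2 * (1 + ε) / 3) :
    ∑ j, ((P ^ t).mulVec v j) ^ 2
      ≥ (1 / n) * (1 + 4 * (3 * γ / 4 - (1 + ε) / 2) ^ 2) := by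
  have hN : (0:ℝ) < (n:ℝ) := by exact_mod_cast hn
  -- properties of P^t
  have hPtnn' : ∀ s, ∀ i j, 0 ≤ (P ^ s) i j := by
    intro s
    induction s with
    | zero =>
      intro i j
      by_cases h : i = j <;> simp [Matrix.one_apply, h]
    | succ s ih =>
      intro i j
      rw [pow_succ, Matrix.mul_apply]
      exact Finset.sum_nonneg fun k _ => mul_nonneg (ih i k) (hPnonneg k j)
  have hPtnn : ∀ i j, 0 ≤ (P ^ t) i j := hPtnn' t
  have hPtcols' : ∀ s, ∀ j, ∑ i, (P ^ s) i j = 1 := by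
    intro s
    induction s with
    | zero => intro j; simp [pow_zero, Matrix.one_apply]
    | succ s ih =>
      intro j
      simp only [pow_succ, Matrix.mul_apply]
      rw [Finset.sum_comm]
      calc ∑ k, ∑ i, (P ^ s) i k * P k j
          = ∑ k, (∑ i, (P ^ s) i k) * P k j := by
            simp [Finset.sum_mul]
        _ = ∑ k, P k j := by simp [ih]
        _ = 1 := hPcols j
  have hPtcols : ∀ j, ∑ i, (P ^ t) i j = 1 := hPtcols' t
  set w : Fin n → ℝ := (P ^ t).mulVec v with hw
  have hwj : ∀ j, w j = ∑ i, (P ^ t) j i * v i := fun j => rfl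
  have hwnn : ∀ j, 0 ≤ w j := fun j => by
    rw [hwj]
    exact Finset.sum_nonneg fun i _ => mul_nonneg (hPtnn j i) (hvnonneg i)
  have hwsum : ∑ j, w j = 1 := by
    simp only [hwj]
    rw [Finset.sum_comm]
    calc ∑ i, ∑ j, (P ^ t) j i * v i
        = ∑ i, (∑ j, (P ^ t) j i) * v i := by simp [Finset.sum_mul]
      _ = ∑ i, v i := by simp [hPtcols]
      _ = 1 := hvsum
  -- mass on A
  have hwA : ∑ j ∈ A, w j ≥ 3 * γ / 4 := by
    have step1 : ∑ j ∈ A, w j = ∑ i, (∑ j ∈ A, (P ^ t) j i) * v i := by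
      simp only [hwj]
      rw [Finset.sum_comm]
      simp [Finset.sum_mul]
    have step2 : ∑ i ∈ Ad, (∑ j ∈ A, (P ^ t) j i) * v i ≤
        ∑ i, (∑ j ∈ A, (P ^ t) j i) * v i := by
      apply Finset.sum_le_sum_of_subset_of_nonneg (Finset.subset_univ Ad)
      intro i _ _
      exact mul_nonneg (Finset.sum_nonneg fun j _ => hPtnn j i) (hvnonneg i)
    have step3 : ∑ i ∈ Ad, (3/4 : ℝ) * v i ≤
        ∑ i ∈ Ad, (∑ j ∈ A, (P ^ t) j i) * v i := by
      apply Finset.sum_le_sum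
      intro i hi
      exact mul_le_mul_of_nonneg_right (hstay i hi) (hvnonneg i)
    have step4 : (3/4 : ℝ) * γ ≤ ∑ i ∈ Ad, (3/4 : ℝ) * v i := by
      rw [← Finset.mul_sum]
      nlinarith [hmass]
    rw [step1]; nlinarith [le_trans step4 (le_trans step3 step2)]
  set a : ℝ := (A.card : ℝ) / n with ha
  have haA : a ≤ (1 + ε) / 2 := by
    rw [ha, div_le_iff₀ hN]
    calc (A.card : ℝ) ≤ (1 + ε) * n / 2 := hAcard
      _ = (1 + ε) / 2 * n := by ring
  set δ : ℝ := 3 * γ / 4 - (1 + ε) / 2 with hδ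
  have hδnn : 0 ≤ δ := by rw [hδ]; nlinarith
  -- L1 lower bound
  have hL : ∑ j, |w j - 1/n| ≥ 2 * δ := by
    have hsplit : ∑ j ∈ Aᶜ, |w j - 1/(n:ℝ)| + ∑ j ∈ A, |w j - 1/(n:ℝ)|
        = ∑ j, |w j - 1/(n:ℝ)| := Finset.sum_compl_add_sum A _
    have h1 : ∑ j ∈ A, (w j - 1/(n:ℝ)) ≤ ∑ j ∈ A, |w j - 1/(n:ℝ)| :=
      Finset.sum_le_sum fun j _ => le_abs_self _
    have h2 : ∑ j ∈ Aᶜ, (1/(n:ℝ) - w j) ≤ ∑ j ∈ Aᶜ, |w j - 1/(n:ℝ)| :=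
      Finset.sum_le_sum fun j _ => by rw [abs_sub_comm]; exact le_abs_self _
    have e1 : ∑ j ∈ A, (w j - 1/(n:ℝ)) = (∑ j ∈ A, w j) - a := by
      rw [Finset.sum_sub_distrib, Finset.sum_const, ha, nsmul_eq_mul]
      field_simp
    have e2 : ∑ j ∈ Aᶜ, (1/(n:ℝ) - w j) = (∑ j ∈ A, w j) - a := by
      have hc : ∑ j ∈ Aᶜ, (1/(n:ℝ) - w j) + ∑ j ∈ A, (1/(n:ℝ) - w j)
          = ∑ j, (1/(n:ℝ) - w j) := Finset.sum_compl_add_sum A _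
      have huniv : ∑ j : Fin n, (1/(n:ℝ) - w j) = 0 := by
        rw [Finset.sum_sub_distrib, hwsum, Finset.sum_const, Finset.card_univ,
          Fintype.card_fin, nsmul_eq_mul]
        field_simp
        norm_num
      have e3 : ∑ j ∈ A, (1/(n:ℝ) - w j) = a - ∑ j ∈ A, w j := by
        rw [Finset.sum_sub_distrib, Finset.sum_const, ha, nsmul_eq_mul]
        field_simp
      linarith [hc, huniv, e3]
    have hwAδ : (∑ j ∈ A, w j) - a ≥ δ := by
      rw [hδ]; linarith [hwA, haA]
    linarith [hsplit, h1, h2, e1 ▸ h1, e2 ▸ h2]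
  -- Cauchy–Schwarz
  have hCS : (∑ j, |w j - 1/(n:ℝ)|) ^ 2 ≤ (n:ℝ) * ∑ j, (w j - 1/(n:ℝ)) ^ 2 := by
    have := sq_sum_le_card_mul_sum_sq (s := Finset.univ)
      (f := fun j : Fin n => |w j - 1/(n:ℝ)|)
    simpa [sq_abs, Finset.card_univ] using this
  -- expansion
  have hexp : ∑ j, w j ^ 2 = (∑ j, (w j - 1/(n:ℝ)) ^ 2) + 1/(n:ℝ) := by
    have : ∀ j : Fin n, (w j - 1/(n:ℝ)) ^ 2
        = w j ^ 2 - 2/(n:ℝ) * w j + 1/(n:ℝ)^2 := fun j => by ring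
    rw [Finset.sum_congr rfl fun j _ => this j]
    rw [Finset.sum_add_distrib, Finset.sum_sub_distrib, ← Finset.mul_sum, hwsum,
      Finset.sum_const, Finset.card_univ, Fintype.card_fin, nsmul_eq_mul]
    field_simp
    ring
  have hLnn : 0 ≤ ∑ j, |w j - 1/(n:ℝ)| :=
    Finset.sum_nonneg fun j _ => abs_nonneg _
  have hkey : (n:ℝ) * ∑ j, w j ^ 2 ≥ 1 + 4 * δ ^ 2 := by
    have hL2 : (2 * δ) ^ 2 ≤ (∑ j, |w j - 1/(n:ℝ)|) ^ 2 := by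
      apply sq_le_sq' <;> nlinarith
    have hmul : (n:ℝ) * ∑ j, w j ^ 2 = (n:ℝ) * (∑ j, (w j - 1/(n:ℝ)) ^ 2) + 1 := by
      rw [hexp, mul_add, mul_one_div_cancel hN.ne']
    have h4 : (2 * δ) ^ 2 = 4 * δ ^ 2 := by ring
    set S := ∑ j, (w j - 1/(n:ℝ)) ^ 2 with hS
    set L := ∑ j, |w j - 1/(n:ℝ)| with hLdef
    linarith [hCS, hL2, hmul]
  rw [ge_iff_le, one_div, inv_mul_le_iff₀ hN]
  linarith [hkey]
end
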